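/- Pauling-type bound on the generic degeneracy: For every k-QSAT interaction hypergraph on N qubits with M clauses, each of size k, the minimal kernel dimension satisfies min over all choices of clause vectors φ of dim ker H_φ ≤ 2^N (1 − 2^{−k})^M. In particular, if M > N · (−1/log₂(1 − 2^{−k})) then this minimum is strictly less than 1, i.e., there exists a choice of projectors with trivial kernel. -/
import Mathlib

open scoped BigOperators

noncomputable section

/-- The matrix of the rank-one projector `|φ⟩⟨φ|` acting on the qubits in the
`k`-element set `S` and as the identity on the remaining qubits. -/
def clauseProj {N : ℕ} (S : Finset (Fin N)) (φ : ({i // i ∈ S} → Fin 2) → ℂ) :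
    Matrix (Fin N → Fin 2) (Fin N → Fin 2) ℂ :=
  fun σ τ =>
    (if ∀ i : Fin N, i ∉ S → σ i = τ i then (1 : ℂ) else 0) *
      φ (fun i => σ i.1) * (starRingEnd ℂ) (φ (fun i => τ i.1))

/-- The `k`-QSAT Hamiltonian `H_φ = ∑ m, Π_m` associated to the interaction
hypergraph `S : Fin M → Finset (Fin N)` and the clause vectors `φ m`. -/
def qsatHam {N M : ℕ} (S : Fin M → Finset (Fin N))
    (φ : ∀ m, ({i // i ∈ S m} → Fin 2) → ℂ) :
    Matrix (Fin N → Fin 2) (Fin N → Fin 2) ℂ :=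
  ∑ m, clauseProj (S m) (φ m)

/-- `φ` is a unit vector. -/
def IsUnitVec {α : Type*} [Fintype α] (φ : α → ℂ) : Prop :=
  ∑ x, Complex.normSq (φ x) = 1

/-- The dimension of the zero-energy eigenspace `ker H_φ`. -/
def kerDim {N M : ℕ} (S : Fin M → Finset (Fin N))
    (φ : ∀ m, ({i // i ∈ S m} → Fin 2) → ℂ) : ℕ :=
  Module.finrank ℂ (LinearMap.ker (Matrix.mulVecLin (qsatHam S φ)))

/-- A computational basis vector is a unit vector. -/
lemma isUnitVec_delta {α : Type*} [Fintype α] [DecidableEq α] (x : α) :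
    IsUnitVec (fun y => if y = x then (1 : ℂ) else 0) := by
  unfold IsUnitVec
  have : ∀ y : α, Complex.normSq (if y = x then (1 : ℂ) else 0)
      = if y = x then (1 : ℝ) else 0 := by
    intro y; by_cases h : y = x <;> simp [h]
  simp only [this]
  simp

/-- The clause projector of a basis vector is diagonal. -/
lemma clauseProj_delta {N : ℕ} (S : Finset (Fin N)) (x : {i // i ∈ S} → Fin 2) :
    clauseProj S (fun y => if y = x then (1 : ℂ) else 0) =
      Matrix.diagonal (fun σ =>
        if (fun i : {i // i ∈ S} => σ i.1) = x then (1 : ℂ) else 0) := by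
  funext σ τ
  simp only [clauseProj, Matrix.diagonal_apply]
  by_cases hst : σ = τ
  · subst hst
    simp only [if_pos (fun i _ => rfl), one_mul, if_pos rfl]
    by_cases h : (fun i : {i // i ∈ S} => σ i.1) = x <;> simp [h]
  · rw [if_neg hst]
    by_cases hA : ∀ i : Fin N, i ∉ S → σ i = τ i
    · by_cases h1 : (fun i : {i // i ∈ S} => σ i.1) = x
      · by_cases h2 : (fun i : {i // i ∈ S} => τ i.1) = x
        · exfalso; apply hst; funext i
          by_cases hi : i ∈ S
          · have e1 := congrFun h1 ⟨i, hi⟩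
            have e2 := congrFun h2 ⟨i, hi⟩
            simp only at e1 e2
            rw [e1, e2]
          · exact hA i hi
        · simp [h2]
      · simp [h1]
    · simp [hA]

/-- Kernel dimension of a diagonal matrix. -/
lemma kerDim_diagonal {n : Type*} [Fintype n] [DecidableEq n] (d : n → ℂ) :
    Module.finrank ℂ (LinearMap.ker (Matrix.diagonal d).mulVecLin) =
      Fintype.card {i // d i = 0} := by
  classical
  have h1 := LinearMap.finrank_range_add_finrank_ker (Matrix.diagonal d).mulVecLin
  have h2 : (Matrix.diagonal d).rank = Fintype.card {i // d i ≠ 0} :=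
    Matrix.rank_diagonal d
  rw [Matrix.rank] at h2
  rw [Module.finrank_fintype_fun_eq_card, h2] at h1
  have h3 : Fintype.card {i // d i ≠ 0} = Fintype.card n - Fintype.card {i // d i = 0} :=
    Fintype.card_subtype_compl _
  have h4 : Fintype.card {i // d i = 0} ≤ Fintype.card n := Fintype.card_subtype_le _
  omega

theorem pauling_bound (N M k : ℕ)
    (S : Fin M → Finset (Fin N)) (hS : ∀ m, (S m).card = k) :
    ((sInf {r : ℕ | ∃ φ : ∀ m, ({i // i ∈ S m} → Fin 2) → ℂ,
        (∀ m, IsUnitVec (φ m)) ∧ kerDim S φ = r} : ℕ) : ℝ) ≤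
      2 ^ N * (1 - ((2 : ℝ) ^ k)⁻¹) ^ M ∧
    ((M : ℝ) > (N : ℝ) * (-1 / Real.logb 2 (1 - ((2 : ℝ) ^ k)⁻¹)) →
      ∃ φ : ∀ m, ({i // i ∈ S m} → Fin 2) → ℂ,
        (∀ m, IsUnitVec (φ m)) ∧ kerDim S φ = 0) := by
  classical
  set A := {r : ℕ | ∃ φ : ∀ m, ({i // i ∈ S m} → Fin 2) → ℂ,
      (∀ m, IsUnitVec (φ m)) ∧ kerDim S φ = r} with hA
  -- notation
  set restr : (Fin N → Fin 2) → ∀ m, ({i // i ∈ S m} → Fin 2) :=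
    fun σ m i => σ i.1 with hrestr
  -- kernel dimension for a basis-vector choice x
  have hker : ∀ x : ∀ m, ({i // i ∈ S m} → Fin 2),
      kerDim S (fun m y => if y = x m then (1 : ℂ) else 0) =
        Fintype.card {σ : Fin N → Fin 2 // ∀ m, restr σ m ≠ x m} := by
    intro x
    have hd : qsatHam S (fun m y => if y = x m then (1 : ℂ) else 0) =
        Matrix.diagonal (fun σ => ∑ m, if restr σ m = x m then (1 : ℂ) else 0) := by
      unfold qsatHam
      have : ∀ m : Fin M, clauseProj (S m) (fun y => if y = x m then (1 : ℂ) else 0) =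
          Matrix.diagonal (fun σ => if restr σ m = x m then (1 : ℂ) else 0) :=
        fun m => clauseProj_delta (S m) (x m)
      simp only [this]
      funext σ τ
      simp only [Matrix.sum_apply, Matrix.diagonal_apply]
      by_cases h : σ = τ
      · simp [h]
      · simp [h]
    unfold kerDim
    rw [hd, kerDim_diagonal]
    apply Fintype.card_congr
    apply Equiv.subtypeEquivRight
    intro σ
    rw [Finset.sum_boole, Nat.cast_eq_zero, Finset.card_eq_zero,
      Finset.filter_eq_empty_iff]
    simp
  -- membership in A for each x
  have hmem : ∀ x : ∀ m, ({i // i ∈ S m} → Fin 2),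
      Fintype.card {σ : Fin N → Fin 2 // ∀ m, restr σ m ≠ x m} ∈ A := by
    intro x
    exact ⟨fun m y => if y = x m then (1 : ℂ) else 0,
      fun m => isUnitVec_delta (x m), hker x⟩
  -- counting: the sum over all x
  have hcardT : ∀ m : Fin M, Fintype.card ({i // i ∈ S m} → Fin 2) = 2 ^ k := by
    intro m
    rw [Fintype.card_fun, Fintype.card_fin, Fintype.card_coe, hS m]
  have hsum : ∑ x : ∀ m, ({i // i ∈ S m} → Fin 2),
      Fintype.card {σ : Fin N → Fin 2 // ∀ m, restr σ m ≠ x m}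
        = 2 ^ N * (2 ^ k - 1) ^ M := by
    have step : ∀ x : ∀ m, ({i // i ∈ S m} → Fin 2), Fintype.card {σ : Fin N → Fin 2 // ∀ m, restr σ m ≠ x m}
        = ∑ σ : Fin N → Fin 2, if (∀ m, restr σ m ≠ x m) then 1 else 0 := by
      intro x
      rw [Fintype.card_subtype, Finset.card_filter]
    simp only [step]
    rw [Finset.sum_comm]
    have inner : ∀ σ : Fin N → Fin 2,
        (∑ x : ∀ m, ({i // i ∈ S m} → Fin 2),
          if (∀ m, restr σ m ≠ x m) then 1 else 0) = (2 ^ k - 1) ^ M := by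
      intro σ
      rw [Finset.sum_boole]
      have : (Finset.univ.filter fun y : ∀ m, ({i // i ∈ S m} → Fin 2) =>
          ∀ m, restr σ m ≠ y m) = Fintype.piFinset (fun m => {restr σ m}ᶜ) := by
        ext y
        simp [Fintype.mem_piFinset, ne_comm]
      rw [this, Fintype.card_piFinset]
      have : ∀ m : Fin M, ({restr σ m}ᶜ : Finset ({i // i ∈ S m} → Fin 2)).card
          = 2 ^ k - 1 := by
        intro m
        rw [Finset.card_compl, Finset.card_singleton, hcardT m]
      simp [this]
    simp only [inner]
    simp [Fintype.card_fun]
  -- extract a good x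
  have hcardX : Fintype.card (∀ m, ({i // i ∈ S m} → Fin 2)) = (2 ^ k) ^ M := by
    rw [Fintype.card_pi]
    simp [hcardT]
  obtain ⟨x, -, hx⟩ : ∃ x ∈ (Finset.univ : Finset (∀ m, ({i // i ∈ S m} → Fin 2))),
      Fintype.card {σ : Fin N → Fin 2 // ∀ m, restr σ m ≠ x m} * (2 ^ k) ^ M
        ≤ 2 ^ N * (2 ^ k - 1) ^ M := by
    apply Finset.exists_le_of_sum_le Finset.univ_nonempty
    rw [← Finset.sum_mul, hsum, Finset.sum_const, Finset.card_univ, hcardX, smul_eq_mul]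
    ring_nf
    exact le_refl _
  set c := Fintype.card {σ : Fin N → Fin 2 // ∀ m, restr σ m ≠ x m} with hc
  -- real bound on c
  have h2k : (1 : ℕ) ≤ 2 ^ k := Nat.one_le_two_pow
  have hcR : (c : ℝ) ≤ 2 ^ N * (1 - ((2 : ℝ) ^ k)⁻¹) ^ M := by
    have hcast : ((2 ^ k - 1 : ℕ) : ℝ) = 2 ^ k - 1 := by
      push_cast [Nat.cast_sub h2k]; ring
    have h1 : (c : ℝ) * ((2 : ℝ) ^ k) ^ M ≤ 2 ^ N * ((2 : ℝ) ^ k - 1) ^ M := by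
      have h0 := (Nat.cast_le (α := ℝ)).mpr hx
      push_cast [hcast] at h0
      convert h0 using 2 <;> push_cast <;> ring
    have hpos : (0 : ℝ) < ((2 : ℝ) ^ k) ^ M := by positivity
    have hq : 1 - ((2 : ℝ) ^ k)⁻¹ = ((2 : ℝ) ^ k - 1) / 2 ^ k := by
      field_simp
    rw [hq, div_pow, ← mul_div_assoc, le_div_iff₀ hpos]
    exact h1
  -- sInf bound
  have hinf_le : sInf A ≤ c := Nat.sInf_le (hmem x)
  have hboundR : ((sInf A : ℕ) : ℝ) ≤ 2 ^ N * (1 - ((2 : ℝ) ^ k)⁻¹) ^ M :=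
    le_trans (Nat.cast_le.mpr hinf_le) hcR
  refine ⟨hboundR, fun hM => ?_⟩
  -- part 2
  have hAne : A.Nonempty := ⟨c, hmem x⟩
  suffices h0 : sInf A = 0 by
    have := Nat.sInf_mem hAne
    rw [h0] at this
    exact this
  set q : ℝ := 1 - ((2 : ℝ) ^ k)⁻¹ with hqdef
  have hlt1 : (2 : ℝ) ^ N * q ^ M < 1 := by
    by_cases hk : k = 0
    · have hq0 : q = 0 := by subst hk; simp [hqdef]
      rw [hq0, Real.logb_zero, div_zero, mul_zero] at hM
      have hM1 : 0 < M := by exact_mod_cast hM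
      rw [hq0, zero_pow hM1.ne', mul_zero]; norm_num
    · have h2k1 : (1 : ℝ) < 2 ^ k := by
        exact_mod_cast Nat.one_lt_two_pow_iff.mpr hk
      have hq0 : 0 < q := by
        have h := inv_lt_one_of_one_lt₀ h2k1
        rw [hqdef]; linarith
      have hq1 : q < 1 := by
        have : (0 : ℝ) < ((2 : ℝ) ^ k)⁻¹ := by positivity
        rw [hqdef]; linarith
      have hlogq : Real.log q < 0 := Real.log_neg hq0 hq1
      have hlog2 : (0 : ℝ) < Real.log 2 := Real.log_pos (by norm_num)
      have hneg : (0 : ℝ) < -Real.log q := by linarith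
      have key : (N : ℝ) * Real.log 2 < (M : ℝ) * (-Real.log q) := by
        have hlqne : Real.log q ≠ 0 := ne_of_lt hlogq
        have h1 : -1 / Real.logb 2 q = Real.log 2 / (-Real.log q) := by
          rw [Real.logb]
          field_simp
        rw [h1, ← mul_div_assoc] at hM
        exact (div_lt_iff₀ hneg).mp hM
      have hprodpos : (0 : ℝ) < 2 ^ N * q ^ M := by positivity
      rw [← Real.log_lt_log_iff hprodpos one_pos, Real.log_one,
        Real.log_mul (by positivity) (by positivity), Real.log_pow, Real.log_pow]
      nlinarith [key]
  have : ((sInf A : ℕ) : ℝ) < 1 := lt_of_le_of_lt hboundR hlt1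
  exact_mod_cast Nat.lt_one_iff.mp (by exact_mod_cast this)
end
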